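/- arXiv:1812.01916 — 2 statements merged into one kernel-verified Lean document; each statement's English description precedes it below -/
import Mathlib

section
/- The sets I_l = {m(0,b,c,d) : b,c,d ∈ GF(2)} and I_r = {m(a,0,c,d) : a,c,d ∈ GF(2)} are two-sided ideals of R, each of cardinality 8, each is a maximal two-sided ideal of R, and they are the only maximal two-sided ideals of R. -/
open Matrix

/-- The matrix m(a,b,c,d) = [[a,c,d],[0,b,0],[0,0,b]] over GF(2). -/
def m (a b c d : ZMod 2) : Matrix (Fin 3) (Fin 3) (ZMod 2) :=
  !![a, c, d; 0, b, 0; 0, 0, b]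

lemma m_mul (a b c d a' b' c' d' : ZMod 2) :
    m a b c d * m a' b' c' d' =
      m (a * a') (b * b') (a * c' + c * b') (a * d' + d * b') := by
  ext i j
  fin_cases i <;> fin_cases j <;>
    simp [m, Matrix.mul_apply, Fin.sum_univ_three, Matrix.vecHead, Matrix.vecTail]

/-- The ring R, as a subring of the 3×3 matrices over GF(2). -/
def Rring : Subring (Matrix (Fin 3) (Fin 3) (ZMod 2)) where
  carrier := {A | ∃ a b c d : ZMod 2, A = m a b c d}
  zero_mem' := ⟨0, 0, 0, 0, by ext i j; fin_cases i <;> fin_cases j <;> simp [m, Matrix.vecHead, Matrix.vecTail]⟩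
  one_mem' := ⟨1, 1, 0, 0, by ext i j; fin_cases i <;> fin_cases j <;> simp [m, Matrix.one_apply, Matrix.vecHead, Matrix.vecTail]⟩
  add_mem' := by
    rintro A B ⟨a, b, c, d, rfl⟩ ⟨a', b', c', d', rfl⟩
    exact ⟨a + a', b + b', c + c', d + d',
      by ext i j; fin_cases i <;> fin_cases j <;> simp [m, Matrix.vecHead, Matrix.vecTail]⟩
  neg_mem' := by
    rintro A ⟨a, b, c, d, rfl⟩
    exact ⟨-a, -b, -c, -d,
      by ext i j; fin_cases i <;> fin_cases j <;> simp [m, Matrix.vecHead, Matrix.vecTail]⟩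
  mul_mem' := by
    rintro A B ⟨a, b, c, d, rfl⟩ ⟨a', b', c', d', rfl⟩
    exact ⟨a * a', b * b', a * c' + c * b', a * d' + d * b', m_mul a b c d a' b' c' d'⟩

lemma m_mem (a b c d : ZMod 2) : m a b c d ∈ Rring := ⟨a, b, c, d, rfl⟩

/-- The element m(a,b,c,d) viewed as an element of the ring R. -/
def mm (a b c d : ZMod 2) : Rring := ⟨m a b c d, m_mem a b c d⟩

/-- The set I_l = {m(0,b,c,d) : b,c,d ∈ GF(2)}, as a subset of R. -/
def Il : Set Rring := {x | ∃ b c d : ZMod 2, x = mm 0 b c d}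

/-- The set I_r = {m(a,0,c,d) : a,c,d ∈ GF(2)}, as a subset of R. -/
def Ir : Set Rring := {x | ∃ a c d : ZMod 2, x = mm a 0 c d}

lemma mm_val (a b c d : ZMod 2) : (mm a b c d : Matrix (Fin 3) (Fin 3) (ZMod 2)) = m a b c d := rfl

lemma m00 (a b c d : ZMod 2) : m a b c d 0 0 = a := by simp [m]
lemma m11 (a b c d : ZMod 2) : m a b c d 1 1 = b := by simp [m]
lemma m01 (a b c d : ZMod 2) : m a b c d 0 1 = c := by simp [m]
lemma m02 (a b c d : ZMod 2) : m a b c d 0 2 = d := by simp [m]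

lemma repr_mm (x : Rring) : x = mm (x.1 0 0) (x.1 1 1) (x.1 0 1) (x.1 0 2) := by
  obtain ⟨a, b, c, d, h⟩ := x.2
  apply Subtype.ext
  rw [mm_val, h, m00, m11, m01, m02]

lemma mm_inj {a b c d a' b' c' d' : ZMod 2} (h : mm a b c d = mm a' b' c' d') :
    a = a' ∧ b = b' ∧ c = c' ∧ d = d' := by
  have h' : m a b c d = m a' b' c' d' := congrArg Subtype.val h
  exact ⟨by rw [← m00 a b c d, h', m00], by rw [← m11 a b c d, h', m11],
    by rw [← m01 a b c d, h', m01], by rw [← m02 a b c d, h', m02]⟩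

lemma mm_mul (a b c d a' b' c' d' : ZMod 2) :
    mm a b c d * mm a' b' c' d' =
      mm (a * a') (b * b') (a * c' + c * b') (a * d' + d * b') :=
  Subtype.ext (m_mul a b c d a' b' c' d')

lemma mm_add (a b c d a' b' c' d' : ZMod 2) :
    mm a b c d + mm a' b' c' d' = mm (a + a') (b + b') (c + c') (d + d') := by
  apply Subtype.ext
  show m a b c d + m a' b' c' d' = _
  ext i j
  fin_cases i <;> fin_cases j <;> simp [mm, m, Matrix.vecHead, Matrix.vecTail]

lemma one_mm : (1 : Rring) = mm 1 1 0 0 := by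
  apply Subtype.ext
  show (1 : Matrix (Fin 3) (Fin 3) (ZMod 2)) = m 1 1 0 0
  ext i j
  fin_cases i <;> fin_cases j <;> simp [mm, m, Matrix.one_apply, Matrix.vecHead, Matrix.vecTail]

lemma mem_Il_iff (x : Rring) : x ∈ Il ↔ x.1 0 0 = 0 := by
  constructor
  · rintro ⟨b, c, d, rfl⟩; exact m00 0 b c d
  · intro h
    exact ⟨x.1 1 1, x.1 0 1, x.1 0 2, by rw [← h]; exact repr_mm x⟩

lemma mem_Ir_iff (x : Rring) : x ∈ Ir ↔ x.1 1 1 = 0 := by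
  constructor
  · rintro ⟨a, c, d, rfl⟩; exact m11 a 0 c d
  · intro h
    exact ⟨x.1 0 0, x.1 0 1, x.1 0 2, by rw [← h]; exact repr_mm x⟩

lemma entry00_add (x y : Rring) : (x + y).1 0 0 = x.1 0 0 + y.1 0 0 := rfl
lemma entry00_neg (x : Rring) : (-x).1 0 0 = -(x.1 0 0) := rfl
lemma entry11_add (x y : Rring) : (x + y).1 1 1 = x.1 1 1 + y.1 1 1 := rfl
lemma entry11_neg (x : Rring) : (-x).1 1 1 = -(x.1 1 1) := rfl

lemma entry00_mul (x y : Rring) : (x * y).1 0 0 = x.1 0 0 * y.1 0 0 := by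
  have hx := repr_mm x; have hy := repr_mm y
  rw [hx, hy, mm_mul, mm_val, m00, mm_val, m00, mm_val, m00]

lemma entry11_mul (x y : Rring) : (x * y).1 1 1 = x.1 1 1 * y.1 1 1 := by
  have hx := repr_mm x; have hy := repr_mm y
  rw [hx, hy, mm_mul, mm_val, m11, mm_val, m11, mm_val, m11]

def Kl : TwoSidedIdeal Rring :=
  TwoSidedIdeal.mk' Il
    ((mem_Il_iff 0).2 rfl)
    (fun {x y} hx hy => (mem_Il_iff _).2 (by
      rw [entry00_add, (mem_Il_iff x).1 hx, (mem_Il_iff y).1 hy, add_zero]))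
    (fun {x} hx => (mem_Il_iff _).2 (by
      rw [entry00_neg, (mem_Il_iff x).1 hx, neg_zero]))
    (fun {x y} hy => (mem_Il_iff _).2 (by
      rw [entry00_mul, (mem_Il_iff y).1 hy, mul_zero]))
    (fun {x y} hx => (mem_Il_iff _).2 (by
      rw [entry00_mul, (mem_Il_iff x).1 hx, zero_mul]))

def Kr : TwoSidedIdeal Rring :=
  TwoSidedIdeal.mk' Ir
    ((mem_Ir_iff 0).2 rfl)
    (fun {x y} hx hy => (mem_Ir_iff _).2 (by
      rw [entry11_add, (mem_Ir_iff x).1 hx, (mem_Ir_iff y).1 hy, add_zero]))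
    (fun {x} hx => (mem_Ir_iff _).2 (by
      rw [entry11_neg, (mem_Ir_iff x).1 hx, neg_zero]))
    (fun {x y} hy => (mem_Ir_iff _).2 (by
      rw [entry11_mul, (mem_Ir_iff y).1 hy, mul_zero]))
    (fun {x y} hx => (mem_Ir_iff _).2 (by
      rw [entry11_mul, (mem_Ir_iff x).1 hx, zero_mul]))

lemma coe_Kl : (Kl : Set Rring) = Il := TwoSidedIdeal.coe_mk' _ _ _ _ _ _
lemma coe_Kr : (Kr : Set Rring) = Ir := TwoSidedIdeal.coe_mk' _ _ _ _ _ _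

lemma mem_Kl (x : Rring) : x ∈ Kl ↔ x.1 0 0 = 0 := by
  rw [← SetLike.mem_coe, coe_Kl]; exact mem_Il_iff x
lemma mem_Kr (x : Rring) : x ∈ Kr ↔ x.1 1 1 = 0 := by
  rw [← SetLike.mem_coe, coe_Kr]; exact mem_Ir_iff x

lemma zmod2_ne (z : ZMod 2) (h : z ≠ 0) : z = 1 := by
  revert h; revert z; decide

lemma key (K : TwoSidedIdeal Rring) : K ≤ Kl ∨ K ≤ Kr ∨ K = ⊤ := by
  by_cases hA : ∀ x ∈ K, x.1 0 0 = 0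
  · exact Or.inl (fun x hx => (mem_Kl x).2 (hA x hx))
  by_cases hB : ∀ x ∈ K, x.1 1 1 = 0
  · exact Or.inr (Or.inl (fun x hx => (mem_Kr x).2 (hB x hx)))
  push_neg at hA hB
  obtain ⟨x, hxK, hxa⟩ := hA
  obtain ⟨y, hyK, hyb⟩ := hB
  have ha : x.1 0 0 = 1 := zmod2_ne _ hxa
  have hb : y.1 1 1 = 1 := zmod2_ne _ hyb
  have heK : mm 1 0 0 0 ∈ K := by
    have h1 : mm 1 0 0 0 * x ∈ K := K.mul_mem_left _ _ hxK
    have h2 : mm 1 0 0 0 * x * mm 1 0 0 0 ∈ K := K.mul_mem_right _ _ h1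
    have h3 : mm 1 0 0 0 * x * mm 1 0 0 0 = mm 1 0 0 0 := by
      rw [repr_mm x, ha, mm_mul, mm_mul]
      norm_num
    rwa [h3] at h2
  have hfK : mm 0 1 0 0 ∈ K := by
    have h1 : mm 0 1 0 0 * y ∈ K := K.mul_mem_left _ _ hyK
    have h3 : mm 0 1 0 0 * y = mm 0 1 0 0 := by
      rw [repr_mm y, hb, mm_mul]
      norm_num
    rwa [h3] at h1
  have hone : (1 : Rring) ∈ K := by
    rw [one_mm, show mm 1 1 0 0 = mm 1 0 0 0 + mm 0 1 0 0 by rw [mm_add]; norm_num]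
    exact K.add_mem heK hfK
  exact Or.inr (Or.inr (TwoSidedIdeal.eq_top K hone))

lemma one_entry00 : (1 : Rring).1 0 0 = 1 := by rw [one_mm]; exact m00 1 1 0 0
lemma one_entry11 : (1 : Rring).1 1 1 = 1 := by rw [one_mm]; exact m11 1 1 0 0

lemma Kl_ne_top : Kl ≠ ⊤ := by
  intro h
  have : (1 : Rring) ∈ Kl := h ▸ trivial
  rw [mem_Kl, one_entry00] at this
  exact one_ne_zero this

lemma Kr_ne_top : Kr ≠ ⊤ := by
  intro h
  have : (1 : Rring) ∈ Kr := h ▸ trivial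
  rw [mem_Kr, one_entry11] at this
  exact one_ne_zero this

lemma Kl_not_le_Kr : ¬ Kl ≤ Kr := by
  intro h
  have h1 : mm 0 1 0 0 ∈ Kl := (mem_Kl _).2 (m00 0 1 0 0)
  have h2 := h h1
  rw [mem_Kr, mm_val, m11] at h2
  exact one_ne_zero h2

lemma Kr_not_le_Kl : ¬ Kr ≤ Kl := by
  intro h
  have h1 : mm 1 0 0 0 ∈ Kr := (mem_Kr _).2 (m11 1 0 0 0)
  have h2 := h h1
  rw [mem_Kl, mm_val, m00] at h2
  exact one_ne_zero h2

lemma Kl_coatom : IsCoatom Kl := by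
  refine ⟨Kl_ne_top, fun L hL => ?_⟩
  rcases key L with h | h | h
  · exact absurd h (not_le_of_gt hL)
  · exact absurd (le_trans hL.le h) Kl_not_le_Kr
  · exact h

lemma Kr_coatom : IsCoatom Kr := by
  refine ⟨Kr_ne_top, fun L hL => ?_⟩
  rcases key L with h | h | h
  · exact absurd (le_trans hL.le h) Kr_not_le_Kl
  · exact absurd h (not_le_of_gt hL)
  · exact h

lemma Il_eq_image : Il = (fun p : ZMod 2 × ZMod 2 × ZMod 2 => mm 0 p.1 p.2.1 p.2.2) '' Set.univ := by
  ext x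
  simp only [Set.image_univ, Set.mem_range, Il, Set.mem_setOf_eq, Prod.exists]
  constructor
  · rintro ⟨b, c, d, rfl⟩; exact ⟨b, c, d, rfl⟩
  · rintro ⟨b, c, d, rfl⟩; exact ⟨b, c, d, rfl⟩

lemma Ir_eq_image : Ir = (fun p : ZMod 2 × ZMod 2 × ZMod 2 => mm p.1 0 p.2.1 p.2.2) '' Set.univ := by
  ext x
  simp only [Set.image_univ, Set.mem_range, Ir, Set.mem_setOf_eq, Prod.exists]
  constructor
  · rintro ⟨a, c, d, rfl⟩; exact ⟨a, c, d, rfl⟩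
  · rintro ⟨a, c, d, rfl⟩; exact ⟨a, c, d, rfl⟩

lemma Il_ncard : Il.ncard = 8 := by
  rw [Il_eq_image, Set.ncard_image_of_injective _ (fun p q h => ?_), Set.ncard_univ]
  · simp [Nat.card_eq_fintype_card]
  · obtain ⟨-, h1, h2, h3⟩ := mm_inj h
    exact Prod.ext h1 (Prod.ext h2 h3)

lemma Ir_ncard : Ir.ncard = 8 := by
  rw [Ir_eq_image, Set.ncard_image_of_injective _ (fun p q h => ?_), Set.ncard_univ]
  · simp [Nat.card_eq_fintype_card]
  · obtain ⟨h1, -, h2, h3⟩ := mm_inj h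
    exact Prod.ext h1 (Prod.ext h2 h3)

/-- I_l and I_r are two-sided ideals of R of cardinality 8; each is a maximal two-sided
ideal (i.e. a coatom in the lattice of two-sided ideals), and they are the only maximal
two-sided ideals of R. -/
theorem maximal_two_sided_ideals :
    (∃ Kl : TwoSidedIdeal Rring, (Kl : Set Rring) = Il) ∧
    (∃ Kr : TwoSidedIdeal Rring, (Kr : Set Rring) = Ir) ∧
    Il.ncard = 8 ∧ Ir.ncard = 8 ∧
    (∀ K : TwoSidedIdeal Rring,
      IsCoatom K ↔ ((K : Set Rring) = Il ∨ (K : Set Rring) = Ir)) := by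
  refine ⟨⟨Kl, coe_Kl⟩, ⟨Kr, coe_Kr⟩, Il_ncard, Ir_ncard, fun K => ⟨fun hK => ?_, ?_⟩⟩
  · rcases key K with h | h | h
    · left
      rcases h.lt_or_eq with h' | h'
      · exact absurd (hK.2 Kl h') Kl_ne_top
      · rw [h', coe_Kl]
    · right
      rcases h.lt_or_eq with h' | h'
      · exact absurd (hK.2 Kr h') Kr_ne_top
      · rw [h', coe_Kr]
    · exact absurd h hK.1
  · rintro (h | h)
    · have : K = Kl := SetLike.coe_injective (h.trans coe_Kl.symm)
      rw [this]; exact Kl_coatom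
    · have : K = Kr := SetLike.coe_injective (h.trans coe_Kr.symm)
      rw [this]; exact Kr_coatom
end

section
/- The three submodules R(t,e), R(f,e), R(s,e) pairwise intersect in exactly the set {0} × I_l; that is, R(t,e) ∩ R(f,e) = R(f,e) ∩ R(s,e) = R(t,e) ∩ R(s,e) = {(0, x) : x ∈ I_l}, a set of 8 vectors. -/
open Matrix

/-- The cyclic left submodule R(x,y) = {(αx, αy) : α ∈ R} of R², as a set of vectors. -/
def RM (x y : Rring) : Set (Rring × Rring) := {p | ∃ α : Rring, p = (α * x, α * y)}

def t : Rring := mm 0 0 1 0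
def f : Rring := mm 0 0 1 1
def s : Rring := mm 0 0 0 1
def e : Rring := mm 0 1 0 0
def u : Rring := mm 0 1 1 0
def v : Rring := mm 0 1 1 1
def w : Rring := mm 0 1 0 1

/-- The nine distinguished generators. -/
def gens : List (Rring × Rring) :=
  [(t, e), (f, e), (s, e), (e, u), (e, v), (e, w), (e, s), (e, f), (e, t)]

lemma m_inj {a b c d a' b' c' d' : ZMod 2} (h : m a b c d = m a' b' c' d') :
    a = a' ∧ b = b' ∧ c = c' ∧ d = d' := by
  refine ⟨congrFun (congrFun h 0) 0, congrFun (congrFun h 1) 1,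
    congrFun (congrFun h 0) 1, congrFun (congrFun h 0) 2⟩

lemma zero_mm : (0 : Rring) = mm 0 0 0 0 := by
  apply Subtype.ext
  show (0 : Matrix (Fin 3) (Fin 3) (ZMod 2)) = m 0 0 0 0
  ext i j; fin_cases i <;> fin_cases j <;> simp [m, Matrix.vecHead, Matrix.vecTail]

lemma mul_t (a b c d : ZMod 2) : mm a b c d * t = mm 0 0 a 0 := by
  have h := mm_mul a b c d 0 0 1 0; simpa [t] using h

lemma mul_f (a b c d : ZMod 2) : mm a b c d * f = mm 0 0 a a := by
  have h := mm_mul a b c d 0 0 1 1; simpa [f] using h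

lemma mul_s (a b c d : ZMod 2) : mm a b c d * s = mm 0 0 0 a := by
  have h := mm_mul a b c d 0 0 0 1; simpa [s] using h

lemma mul_e (a b c d : ZMod 2) : mm a b c d * e = mm 0 b c d := by
  have h := mm_mul a b c d 0 1 0 0; simpa [e] using h

lemma eq_mm (α : Rring) : ∃ a b c d : ZMod 2, α = mm a b c d := by
  obtain ⟨a, b, c, d, h⟩ := α.2
  exact ⟨a, b, c, d, Subtype.ext h⟩


/-- The submodules R(t,e), R(f,e), R(s,e) pairwise intersect in exactly the set
{0} × I_l, a set of 8 vectors. -/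
theorem pairwise_intersections_first_triple :
    RM t e ∩ RM f e = {p : Rring × Rring | ∃ x ∈ Il, p = (0, x)} ∧
    RM f e ∩ RM s e = {p : Rring × Rring | ∃ x ∈ Il, p = (0, x)} ∧
    RM t e ∩ RM s e = {p : Rring × Rring | ∃ x ∈ Il, p = (0, x)} ∧
    {p : Rring × Rring | ∃ x ∈ Il, p = (0, x)}.ncard = 8 := by
  refine ⟨?_, ?_, ?_, ?_⟩
  · ext p
    simp only [Set.mem_inter_iff, RM, Set.mem_setOf_eq, Il]
    constructor
    · rintro ⟨⟨α, hα⟩, ⟨β, hβ⟩⟩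
      obtain ⟨a, b, c, d, rfl⟩ := eq_mm α
      obtain ⟨a', b', c', d', rfl⟩ := eq_mm β
      rw [mul_t, mul_e] at hα
      rw [mul_f, mul_e] at hβ
      rw [hα] at hβ
      obtain ⟨-, -, ha, h0⟩ := mm_inj (Prod.ext_iff.1 hβ).1
      have ha0 : a = 0 := ha.trans h0.symm
      subst ha0
      refine ⟨mm 0 b c d, ⟨b, c, d, rfl⟩, ?_⟩
      rw [zero_mm]; exact hα
    · rintro ⟨x, ⟨b, c, d, rfl⟩, rfl⟩
      exact ⟨⟨mm 0 b c d, by rw [mul_t, mul_e, zero_mm]⟩,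
             ⟨mm 0 b c d, by rw [mul_f, mul_e, zero_mm]⟩⟩
  · ext p
    simp only [Set.mem_inter_iff, RM, Set.mem_setOf_eq, Il]
    constructor
    · rintro ⟨⟨α, hα⟩, ⟨β, hβ⟩⟩
      obtain ⟨a, b, c, d, rfl⟩ := eq_mm α
      obtain ⟨a', b', c', d', rfl⟩ := eq_mm β
      rw [mul_f, mul_e] at hα
      rw [mul_s, mul_e] at hβ
      rw [hα] at hβ
      obtain ⟨-, -, ha, -⟩ := mm_inj (Prod.ext_iff.1 hβ).1
      subst ha
      refine ⟨mm 0 b c d, ⟨b, c, d, rfl⟩, ?_⟩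
      rw [zero_mm]; exact hα
    · rintro ⟨x, ⟨b, c, d, rfl⟩, rfl⟩
      exact ⟨⟨mm 0 b c d, by rw [mul_f, mul_e, zero_mm]⟩,
             ⟨mm 0 b c d, by rw [mul_s, mul_e, zero_mm]⟩⟩
  · ext p
    simp only [Set.mem_inter_iff, RM, Set.mem_setOf_eq, Il]
    constructor
    · rintro ⟨⟨α, hα⟩, ⟨β, hβ⟩⟩
      obtain ⟨a, b, c, d, rfl⟩ := eq_mm α
      obtain ⟨a', b', c', d', rfl⟩ := eq_mm β
      rw [mul_t, mul_e] at hα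
      rw [mul_s, mul_e] at hβ
      rw [hα] at hβ
      obtain ⟨-, -, ha, -⟩ := mm_inj (Prod.ext_iff.1 hβ).1
      subst ha
      refine ⟨mm 0 b c d, ⟨b, c, d, rfl⟩, ?_⟩
      rw [zero_mm]; exact hα
    · rintro ⟨x, ⟨b, c, d, rfl⟩, rfl⟩
      exact ⟨⟨mm 0 b c d, by rw [mul_t, mul_e, zero_mm]⟩,
             ⟨mm 0 b c d, by rw [mul_s, mul_e, zero_mm]⟩⟩
  · have hS : {p : Rring × Rring | ∃ x ∈ Il, p = (0, x)} =
        ↑({(0, mm 0 0 0 0), (0, mm 0 0 0 1), (0, mm 0 0 1 0), (0, mm 0 0 1 1),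
           (0, mm 0 1 0 0), (0, mm 0 1 0 1), (0, mm 0 1 1 0), (0, mm 0 1 1 1)} :
          Finset (Rring × Rring)) := by
      ext p
      simp only [Il, Set.mem_setOf_eq, Finset.coe_insert, Set.mem_insert_iff,
        Finset.coe_singleton, Set.mem_singleton_iff]
      constructor
      · rintro ⟨x, ⟨b, c, d, rfl⟩, rfl⟩
        fin_cases b <;> fin_cases c <;> fin_cases d <;> simp <;> decide
      · intro h
        rcases h with h | h | h | h | h | h | h | h <;> subst h <;>
          exact ⟨_, ⟨_, _, _, rfl⟩, rfl⟩
    rw [hS, Set.ncard_coe_finset]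
    decide
end
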